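/- Consider an irreducible finite Markov chain on state space Z with transition probabilities P. For z ∈ Z, let G(z) be the set of spanning trees of the complete directed graph on Z rooted at z (every vertex other than z has exactly one outgoing edge and every vertex has a directed path to z), and define Q(z) = Σ_{g ∈ G(z)} Π_{(z'→z'') ∈ g} P(z', z''). Then π(z) = Q(z) / Σ_{z' ∈ Z} Q(z') defines a stationary distribution of the chain: Σ_{z'} π(z')·P(z', z) = π(z) for all z. -/

import Mathlib

open Finset

/-- If `g` agrees with `h` away from `t`, reachability of `t` transfers from `h` to `g`. -/
private lemma mct_reach_transfer {Z : Type*} {h g : Z → Z} {t : Z}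
    (hag : ∀ x, x ≠ t → g x = h x) :
    ∀ n v, h^[n] v = t → ∃ m, g^[m] v = t := by
  intro n
  induction n with
  | zero => exact fun v hv => ⟨0, hv⟩
  | succ n ih =>
    intro v hv
    by_cases hvt : v = t
    · exact ⟨0, hvt⟩
    · rw [Function.iterate_succ_apply] at hv
      obtain ⟨m, hm⟩ := ih (h v) hv
      exact ⟨m + 1, by rw [Function.iterate_succ_apply, hag v hvt]; exact hm⟩

/-- A vertex other than the root of a tree is not a fixed point. -/
private lemma mct_no_self_fix {Z : Type*} {f : Z → Z} {r v : Z}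
    (hv : ∃ n, f^[n] v = r) (hne : v ≠ r) : f v ≠ v := by
  intro hfv
  obtain ⟨n, hn⟩ := hv
  rw [Function.iterate_fixed hfv n] at hn
  exact hne hn

/-- On the cycle through `z`, the predecessor of `z` is unique. -/
private lemma mct_cycle_pred_unique {Z : Type*} {h : Z → Z} {z a b : Z}
    (ha1 : h a = z) (hb1 : h b = z)
    (ha : ∃ n, h^[n] z = a) (hb : ∃ n, h^[n] z = b) : a = b := by
  obtain ⟨n, hn⟩ := ha
  obtain ⟨m, hm⟩ := hb
  have hpn : Function.IsPeriodicPt h (n + 1) z := by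
    show h^[n + 1] z = z
    rw [Function.iterate_succ_apply', hn, ha1]
  have hpm : Function.IsPeriodicPt h (m + 1) z := by
    show h^[m + 1] z = z
    rw [Function.iterate_succ_apply', hm, hb1]
  have hdn := Function.IsPeriodicPt.minimalPeriod_dvd hpn
  have hdm := Function.IsPeriodicPt.minimalPeriod_dvd hpm
  set p := Function.minimalPeriod h z with hp
  have h1 : n + 1 ≡ 0 [MOD p] := Nat.modEq_zero_iff_dvd.mpr hdn
  have h2 : m + 1 ≡ 0 [MOD p] := Nat.modEq_zero_iff_dvd.mpr hdm
  have h3 : n ≡ m [MOD p] := Nat.ModEq.add_right_cancel' 1 (h1.trans h2.symm)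
  have : h^[n % p] z = h^[m % p] z := by rw [h3]
  rw [Function.iterate_mod_minimalPeriod_eq, Function.iterate_mod_minimalPeriod_eq] at this
  rw [← hn, ← hm, this]

open Classical in
/-- Markov chain tree theorem (Freidlin–Wentzell): the tree-weights `Q` normalize to a
stationary distribution of an irreducible finite Markov chain. -/
theorem markov_chain_tree_theorem {Z : Type*} [Fintype Z] [DecidableEq Z] [Nonempty Z]
    (P : Matrix Z Z ℝ)
    (hP0 : ∀ z z', 0 ≤ P z z') (hP1 : ∀ z, ∑ z', P z z' = 1)
    (hirr : ∀ z z', ∃ n : ℕ, 0 < (P ^ n) z z')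
    (Q : Z → ℝ)
    (hQ : ∀ z, Q z = ∑ f : Z → Z,
      if (f z = z ∧ ∀ z', ∃ n : ℕ, f^[n] z' = z) then
        ∏ z' ∈ Finset.univ.erase z, P z' (f z')
      else 0) :
    ∀ z, ∑ z', (Q z' / ∑ z'', Q z'') * P z' z = Q z / ∑ z'', Q z'' := by
  intro z
  suffices hkey : ∑ z', Q z' * P z' z = Q z by
    calc ∑ z', Q z' / (∑ z'', Q z'') * P z' z
        = ∑ z', Q z' * P z' z / (∑ z'', Q z'') :=
          Finset.sum_congr rfl fun z' _ => div_mul_eq_mul_div _ _ _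
      _ = (∑ z', Q z' * P z' z) / (∑ z'', Q z'') := by rw [Finset.sum_div]
      _ = Q z / ∑ z'', Q z'' := by rw [hkey]
  have h1 : Q z = ∑ z'', Q z * P z z'' := by rw [← Finset.mul_sum, hP1, mul_one]
  rw [h1, ← Finset.add_sum_erase _ (fun z' => Q z' * P z' z) (mem_univ z),
      ← Finset.add_sum_erase _ (fun z'' => Q z * P z z'') (mem_univ z)]
  congr 1
  -- the middle quantity : sum over functions whose every point reaches z,
  -- with z not a fixed point
  have hL : ∑ z' ∈ univ.erase z, Q z' * P z' z
      = ∑ p ∈ ((univ.erase z) ×ˢ (univ : Finset (Z → Z))).filter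
          (fun p : Z × (Z → Z) => p.2 p.1 = p.1 ∧ ∀ v, ∃ n, p.2^[n] v = p.1),
          (∏ v ∈ univ.erase p.1, P v (p.2 v)) * P p.1 z := by
    rw [Finset.sum_filter, Finset.sum_product]
    refine Finset.sum_congr rfl fun z' _ => ?_
    rw [hQ z', Finset.sum_mul]
    exact Finset.sum_congr rfl fun f _ => by rw [ite_mul, zero_mul]
  have hR : ∑ z'' ∈ univ.erase z, Q z * P z z''
      = ∑ p ∈ ((univ.erase z) ×ˢ (univ : Finset (Z → Z))).filter
          (fun p : Z × (Z → Z) => p.2 z = z ∧ ∀ v, ∃ n, p.2^[n] v = z),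
          (∏ v ∈ univ.erase z, P v (p.2 v)) * P z p.1 := by
    rw [Finset.sum_filter, Finset.sum_product]
    refine Finset.sum_congr rfl fun z'' _ => ?_
    rw [hQ z, Finset.sum_mul]
    exact Finset.sum_congr rfl fun f _ => by rw [ite_mul, zero_mul]
  rw [hL, hR]
  have hM : ∀ s : Finset (Z × (Z → Z)), True := fun _ => trivial
  refine Eq.trans (b := ∑ h ∈ (univ : Finset (Z → Z)).filter
      (fun h => (∀ v, ∃ n, h^[n] v = z) ∧ h z ≠ z), ∏ v, P v (h v)) ?_ ?_
  · -- LHS bijection : (z', f) ↦ update f z' z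
    refine Finset.sum_bij (fun p _ => Function.update p.2 p.1 z) ?_ ?_ ?_ ?_
    · rintro ⟨a, f⟩ hp
      rw [Finset.mem_filter, Finset.mem_product, Finset.mem_erase] at hp
      obtain ⟨⟨⟨haz, -⟩, -⟩, hfa, hreach⟩ := hp
      dsimp only at *
      rw [Finset.mem_filter]
      refine ⟨Finset.mem_univ _, fun v => ?_, ?_⟩
      · have hag : ∀ x, x ≠ a → Function.update f a z x = f x :=
          fun x hx => Function.update_of_ne hx _ _
        obtain ⟨n, hn⟩ := hreach v
        obtain ⟨m, hm⟩ := mct_reach_transfer hag n v hn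
        refine ⟨m + 1, ?_⟩
        rw [Function.iterate_succ_apply', hm, Function.update_self]
      · rw [Function.update_of_ne (Ne.symm haz)]
        exact mct_no_self_fix (hreach z) (Ne.symm haz)
    · rintro ⟨a, f⟩ hp ⟨b, g⟩ hq hfg
      rw [Finset.mem_filter, Finset.mem_product, Finset.mem_erase] at hp hq
      obtain ⟨⟨⟨haz, -⟩, -⟩, hfa', hreachf'⟩ := hp
      obtain ⟨⟨⟨hbz, -⟩, -⟩, hgb', hreachg'⟩ := hq
      have hfa : f a = a := hfa'
      have hgb : g b = b := hgb'
      have hreachf : ∀ v, ∃ n, f^[n] v = a := hreachf'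
      have hreachg : ∀ v, ∃ n, g^[n] v = b := hreachg'
      have hfg' : Function.update f a z = Function.update g b z := hfg
      have hab : a = b := by
        have hA : Function.update f a z a = z := Function.update_self _ _ _
        have hB : Function.update f a z b = z := by
          rw [hfg']; exact Function.update_self _ _ _
        have hra : ∃ n, (Function.update f a z)^[n] z = a :=
          mct_reach_transfer (fun x hx => Function.update_of_ne hx _ _)
            (hreachf z).choose z (hreachf z).choose_spec
        have hrb : ∃ n, (Function.update f a z)^[n] z = b := by
          rw [hfg']
          exact mct_reach_transfer (fun x hx => Function.update_of_ne hx _ _)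
            (hreachg z).choose z (hreachg z).choose_spec
        exact mct_cycle_pred_unique hA hB hra hrb
      subst hab
      have hfe : f = g := by
        funext x
        by_cases hx : x = a
        · rw [hx, hfa, hgb]
        · have hx2 := congrFun hfg' x
          rwa [Function.update_of_ne hx, Function.update_of_ne hx] at hx2
      exact congrArg (Prod.mk a) hfe
    · intro h hh
      rw [Finset.mem_filter] at hh
      obtain ⟨-, hreach, hz⟩ := hh
      obtain ⟨n, hn⟩ := hreach (h z)
      set a := h^[n] z with ha
      have hA : h a = z := by
        rw [ha, ← Function.iterate_succ_apply' h n z, Function.iterate_succ_apply]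
        exact hn
      have haz : a ≠ z := fun hc => hz (hc ▸ hA)
      refine ⟨(a, Function.update h a a), ?_, ?_⟩
      · rw [Finset.mem_filter, Finset.mem_product, Finset.mem_erase]
        refine ⟨⟨⟨haz, Finset.mem_univ _⟩, Finset.mem_univ _⟩,
          Function.update_self _ _ _, fun v => ?_⟩
        obtain ⟨k, hk⟩ := hreach v
        have hva : h^[n + k] v = a := by
          rw [Function.iterate_add_apply, hk, ha]
        exact mct_reach_transfer (fun x hx => Function.update_of_ne hx _ _) _ v hva
      · show Function.update (Function.update h a a) a z = h
        rw [Function.update_idem, ← hA, Function.update_eq_self]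
    · rintro ⟨a, f⟩ hp
      rw [Finset.mem_filter, Finset.mem_product, Finset.mem_erase] at hp
      obtain ⟨⟨⟨haz, -⟩, -⟩, hfa, hreach⟩ := hp
      dsimp only at *
      show (∏ v ∈ univ.erase a, P v (f v)) * P a z
          = ∏ v, P v (Function.update f a z v)
      rw [← Finset.mul_prod_erase univ _ (Finset.mem_univ a), Function.update_self,
        mul_comm]
      congr 1
      exact Finset.prod_congr rfl fun x hx =>
        by rw [Function.update_of_ne (Finset.ne_of_mem_erase hx)]
  · -- RHS bijection : (z'', f) ↦ update f z z''
    symm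
    refine Finset.sum_bij (fun p _ => Function.update p.2 z p.1) ?_ ?_ ?_ ?_
    · rintro ⟨a, f⟩ hp
      rw [Finset.mem_filter, Finset.mem_product, Finset.mem_erase] at hp
      obtain ⟨⟨⟨haz, -⟩, -⟩, hfz, hreach⟩ := hp
      dsimp only at *
      rw [Finset.mem_filter]
      refine ⟨Finset.mem_univ _, fun v => ?_, ?_⟩
      · obtain ⟨n, hn⟩ := hreach v
        exact mct_reach_transfer (fun x hx => Function.update_of_ne hx _ _) n v hn
      · rw [Function.update_self]; exact haz
    · rintro ⟨a, f⟩ hp ⟨b, g⟩ hq hfg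
      rw [Finset.mem_filter, Finset.mem_product, Finset.mem_erase] at hp hq
      obtain ⟨⟨⟨haz, -⟩, -⟩, hfz', -⟩ := hp
      obtain ⟨⟨⟨hbz, -⟩, -⟩, hgz', -⟩ := hq
      have hfz : f z = z := hfz'
      have hgz : g z = z := hgz'
      have hfg' : Function.update f z a = Function.update g z b := hfg
      have hab : a = b := by
        have hx2 := congrFun hfg' z
        rwa [Function.update_self, Function.update_self] at hx2
      subst hab
      have hfe : f = g := by
        funext x
        by_cases hx : x = z
        · rw [hx, hfz, hgz]
        · have hx2 := congrFun hfg' x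
          rwa [Function.update_of_ne hx, Function.update_of_ne hx] at hx2
      exact congrArg (Prod.mk a) hfe
    · intro h hh
      rw [Finset.mem_filter] at hh
      obtain ⟨-, hreach, hz⟩ := hh
      refine ⟨(h z, Function.update h z z), ?_, ?_⟩
      · rw [Finset.mem_filter, Finset.mem_product, Finset.mem_erase]
        refine ⟨⟨⟨hz, Finset.mem_univ _⟩, Finset.mem_univ _⟩,
          Function.update_self _ _ _, fun v => ?_⟩
        obtain ⟨n, hn⟩ := hreach v
        exact mct_reach_transfer (fun x hx => Function.update_of_ne hx _ _) n v hn
      · show Function.update (Function.update h z z) z (h z) = h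
        rw [Function.update_idem, Function.update_eq_self]
    · rintro ⟨a, f⟩ hp
      rw [Finset.mem_filter, Finset.mem_product, Finset.mem_erase] at hp
      obtain ⟨⟨⟨haz, -⟩, -⟩, hfz, hreach⟩ := hp
      dsimp only at *
      show (∏ v ∈ univ.erase z, P v (f v)) * P z a
          = ∏ v, P v (Function.update f z a v)
      rw [← Finset.mul_prod_erase univ _ (Finset.mem_univ z), Function.update_self,
        mul_comm]
      congr 1
      exact Finset.prod_congr rfl fun x hx =>
        by rw [Function.update_of_ne (Finset.ne_of_mem_erase hx)]
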